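/- arXiv:1601.01981 — 2 statements merged into one kernel-verified Lean document; each statement's English description precedes it below -/
import Mathlib

section
/- Under the stated clustered-model assumptions, suppose the within-cluster fixed effects are nested (T_h T_k' = 0 for h ≠ k) and L_i = Ü'WÜ − Ü_i'W_iÜ_i = Σ_{k≠i} Ü_k'W_kÜ_k is invertible. Define the N×(r+s) matrix Z block-wise by Z_i = 0 and Z_k = −Ü_k L_i^{-1} M_Ü^{-1} for k ≠ i. Then (I − H_X)_i Z = Ü_i; in particular, Ü_i lies in the column span of (I − H_X)_i. -/
open Matrix MeasureTheory

abbrev Obs {m : ℕ} (n : Fin m → ℕ) : Type := (i : Fin m) × Fin (n i)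

/-- The rows of a stacked matrix belonging to cluster `i`. -/
def cRows {m : ℕ} {n : Fin m → ℕ} {c : Type*} (i : Fin m)
    (M : Matrix (Obs n) c ℝ) : Matrix (Fin (n i)) c ℝ :=
  Matrix.of fun j k => M ⟨i, j⟩ k

/-- The entries of a stacked vector belonging to cluster `i`. -/
def cVec {m : ℕ} {n : Fin m → ℕ} (i : Fin m) (v : Obs n → ℝ) : Fin (n i) → ℝ :=
  fun j => v ⟨i, j⟩

/-- `M_Z = (Zᵀ W Z)⁻¹`. -/
noncomputable def Mmat {Ω q : Type*} [Fintype Ω] [Fintype q] [DecidableEq q]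
    (W : Matrix Ω Ω ℝ) (Z : Matrix Ω q ℝ) : Matrix q q ℝ :=
  (Zᵀ * W * Z)⁻¹

/-- `H_Z = Z M_Z Zᵀ W`. -/
noncomputable def Hmat {Ω q : Type*} [Fintype Ω] [Fintype q] [DecidableEq q]
    (W : Matrix Ω Ω ℝ) (Z : Matrix Ω q ℝ) : Matrix Ω Ω ℝ :=
  Z * Mmat W Z * Zᵀ * W

section helpers

set_option linter.unusedSectionVars false

variable {m : ℕ} {n : Fin m → ℕ} {a b : Type*} [Fintype a] [Fintype b]

lemma cRows_mul (i : Fin m) (A : Matrix (Obs n) a ℝ) (B : Matrix a b ℝ) :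
    cRows i (A * B) = cRows i A * B := by
  ext j c
  simp [cRows, Matrix.mul_apply]

lemma cRows_sub (i : Fin m) (A B : Matrix (Obs n) a ℝ) :
    cRows i (A - B) = cRows i A - cRows i B := rfl

lemma cRows_blockDiagonal_mul (Wb : ∀ i : Fin m, Matrix (Fin (n i)) (Fin (n i)) ℝ)
    (k : Fin m) (B : Matrix (Obs n) a ℝ) :
    cRows k (Matrix.blockDiagonal' Wb * B) = Wb k * cRows k B := by
  ext j y
  show ∑ q : Obs n, Matrix.blockDiagonal' Wb ⟨k, j⟩ q * B q y = _
  rw [← Finset.univ_sigma_univ, Finset.sum_sigma]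
  rw [Finset.sum_eq_single k]
  · simp [cRows, Matrix.mul_apply]
  · intro k' _ hk'
    apply Finset.sum_eq_zero
    intro l _
    rw [Matrix.blockDiagonal'_apply_ne _ _ _ (Ne.symm hk'), zero_mul]
  · simp

lemma transpose_mul_eq_sum (A : Matrix (Obs n) a ℝ) (C : Matrix (Obs n) b ℝ) :
    Aᵀ * C = ∑ k, (cRows k A)ᵀ * cRows k C := by
  ext x y
  rw [Matrix.mul_apply, ← Finset.univ_sigma_univ, Finset.sum_sigma]
  rw [Matrix.sum_apply]
  apply Finset.sum_congr rfl
  intro k _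
  rw [Matrix.mul_apply]
  simp [cRows]

lemma blocksum (Wb : ∀ i : Fin m, Matrix (Fin (n i)) (Fin (n i)) ℝ)
    (A : Matrix (Obs n) a ℝ) (B : Matrix (Obs n) b ℝ) :
    Aᵀ * Matrix.blockDiagonal' Wb * B = ∑ k, (cRows k A)ᵀ * Wb k * cRows k B := by
  rw [Matrix.mul_assoc, transpose_mul_eq_sum]
  apply Finset.sum_congr rfl
  intro k _
  rw [cRows_blockDiagonal_mul, Matrix.mul_assoc]

lemma mulVec_blockDiagonal (Wb : ∀ i : Fin m, Matrix (Fin (n i)) (Fin (n i)) ℝ)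
    (x : Obs n → ℝ) (k : Fin m) (j : Fin (n k)) :
    (Matrix.blockDiagonal' Wb *ᵥ x) ⟨k, j⟩ = (Wb k *ᵥ cVec k x) j := by
  show ∑ q : Obs n, Matrix.blockDiagonal' Wb ⟨k, j⟩ q * x q = _
  rw [← Finset.univ_sigma_univ, Finset.sum_sigma]
  rw [Finset.sum_eq_single k]
  · simp [cVec, Matrix.mulVec, dotProduct]
  · intro k' _ hk'
    exact Finset.sum_eq_zero fun l _ => by
      rw [Matrix.blockDiagonal'_apply_ne _ _ _ (Ne.symm hk'), zero_mul]
  · simp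

lemma dotProduct_sigma (x y : Obs n → ℝ) :
    x ⬝ᵥ y = ∑ k, cVec k x ⬝ᵥ cVec k y := by
  rw [dotProduct, ← Finset.univ_sigma_univ, Finset.sum_sigma]
  rfl

lemma blockDiagonal'_posDef (Wb : ∀ i : Fin m, Matrix (Fin (n i)) (Fin (n i)) ℝ)
    (hWpd : ∀ i, (Wb i).PosDef) : (Matrix.blockDiagonal' Wb).PosDef := by
  refine Matrix.PosDef.of_dotProduct_mulVec_pos ?_ ?_
  · have h : ∀ k, (Wb k)ᵀ = Wb k := fun k => by
      have h2 := (hWpd k).1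
      calc (Wb k)ᵀ = (Wb k)ᴴ := by ext p q; simp [Matrix.conjTranspose_apply]
      _ = Wb k := h2
    show (Matrix.blockDiagonal' Wb)ᴴ = _
    calc (Matrix.blockDiagonal' Wb)ᴴ = (Matrix.blockDiagonal' Wb)ᵀ := by
          ext p q; simp [Matrix.conjTranspose_apply]
    _ = Matrix.blockDiagonal' (fun k => (Wb k)ᵀ) := Matrix.blockDiagonal'_transpose _
    _ = _ := by simp [h]
  · intro x hx
    have hsx : star x = x := by simp
    rw [hsx]
    have hq : x ⬝ᵥ (Matrix.blockDiagonal' Wb *ᵥ x)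
        = ∑ k, cVec k x ⬝ᵥ (Wb k *ᵥ cVec k x) := by
      rw [dotProduct_sigma]
      apply Finset.sum_congr rfl
      intro k _
      apply Finset.sum_congr rfl
      intro j _
      rw [show (cVec k (Matrix.blockDiagonal' Wb *ᵥ x)) j = (Wb k *ᵥ cVec k x) j from
        mulVec_blockDiagonal Wb x k j]
    rw [hq]
    obtain ⟨p, hp⟩ : ∃ p, x p ≠ 0 := Function.ne_iff.mp hx
    apply Finset.sum_pos'
    · intro k _
      have := (hWpd k).posSemidef.dotProduct_mulVec_nonneg (cVec k x)
      simpa using this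
    · refine ⟨p.1, Finset.mem_univ _, ?_⟩
      have hne : cVec p.1 x ≠ 0 := by
        intro h0
        exact hp (by have := congrFun h0 p.2; simpa [cVec] using this)
      have := (hWpd p.1).dotProduct_mulVec_pos hne
      simpa using this

end helpers

/-- with nested within-cluster fixed effects and
`L_i = ÜᵀWÜ − Ü_iᵀW_iÜ_i` invertible, the block-wise matrix `Z` with `Z_i = 0` and
`Z_k = −Ü_k L_i⁻¹ M_Ü⁻¹` for `k ≠ i` satisfies `(I − H_X)_i Z = Ü_i`; in particular the
columns of `Ü_iᵀ` lie in the column span of `(I − H_X)_i`. -/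
theorem Ud_in_column_span_of_residual_projection
    {m u t : ℕ} {n : Fin m → ℕ}
    (Wb : ∀ i : Fin m, Matrix (Fin (n i)) (Fin (n i)) ℝ)
    (hWpd : ∀ i, (Wb i).PosDef)
    (W : Matrix (Obs n) (Obs n) ℝ) (hW : W = Matrix.blockDiagonal' Wb)
    (U : Matrix (Obs n) (Fin u) ℝ) (T : Matrix (Obs n) (Fin t) ℝ)
    (X : Matrix (Obs n) (Fin u ⊕ Fin t) ℝ) (hX : X = Matrix.fromCols U T)
    (hfullrank : IsUnit (Xᵀ * W * X).det)
    (hnested : ∀ h k : Fin m, h ≠ k → cRows h T * (cRows k T)ᵀ = 0)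
    (Ud : Matrix (Obs n) (Fin u) ℝ) (hUd : Ud = (1 - Hmat W T) * U)
    -- the cluster of interest
    (i : Fin m)
    (L : Matrix (Fin u) (Fin u) ℝ)
    (hL : L = Udᵀ * W * Ud - (cRows i Ud)ᵀ * Wb i * cRows i Ud)
    (hLinv : IsUnit L.det)
    -- Z is defined block-wise: Z_i = 0 and Z_k = −Ü_k L⁻¹ M_Ü⁻¹ for k ≠ i
    (Z : Matrix (Obs n) (Fin u) ℝ)
    (hZ : ∀ (a : Obs n) (c : Fin u),
      Z a c = if a.1 = i then 0
        else (-(cRows a.1 Ud * L⁻¹ * (Mmat W Ud)⁻¹)) a.2 c) :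
    cRows i (1 - Hmat W X) * Z = cRows i Ud := by
  have hWpd' : W.PosDef := hW ▸ blockDiagonal'_posDef Wb hWpd
  set G := Tᵀ * W * T with hGdef
  set S := Udᵀ * W * Ud with hSdef
  -- W is symmetric
  have hWs : Wᵀ = W := by
    have h := hWpd'.1
    calc Wᵀ = Wᴴ := by ext p q; simp [Matrix.conjTranspose_apply]
    _ = W := h
  -- X is injective on vectors
  have hXinj : ∀ v, X *ᵥ v = 0 → v = 0 := by
    intro v hv
    have h2 : (Xᵀ * W * X) *ᵥ v = 0 := by
      rw [← Matrix.mulVec_mulVec, hv, Matrix.mulVec_zero]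
    have hinj := Matrix.mulVec_injective_iff_isUnit.mpr
      ((Matrix.isUnit_iff_isUnit_det _).mpr hfullrank)
    exact hinj (h2.trans (Matrix.mulVec_zero _).symm)
  have hTinj : ∀ v, T *ᵥ v = 0 → v = 0 := by
    intro v hv
    have h1 : X *ᵥ Sum.elim (0 : Fin u → ℝ) v = 0 := by
      rw [hX, Matrix.fromCols_mulVec_sumElim]
      simp [hv]
    have h0 := hXinj _ h1
    funext j
    exact congrFun h0 (Sum.inr j)
  have hquad : ∀ (v : Fin t → ℝ),
      v ⬝ᵥ ((Tᵀ * W * T) *ᵥ v) = (T *ᵥ v) ⬝ᵥ (W *ᵥ (T *ᵥ v)) := by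
    intro v
    rw [← Matrix.mulVec_mulVec, ← Matrix.mulVec_mulVec, dotProduct_mulVec,
      Matrix.vecMul_transpose]
  have hG : IsUnit G.det := by
    have hker : ∀ v, G *ᵥ v = 0 → v = 0 := by
      intro v hv
      have h0 : v ⬝ᵥ (G *ᵥ v) = 0 := by rw [hv]; simp
      rw [hGdef, hquad] at h0
      by_cases hTv : T *ᵥ v = 0
      · exact hTinj v hTv
      · have hpos := hWpd'.dotProduct_mulVec_pos hTv
        have hpos' : 0 < (T *ᵥ v) ⬝ᵥ (W *ᵥ (T *ᵥ v)) := by simpa using hpos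
        exact absurd h0 hpos'.ne'
    have hinj : Function.Injective G.mulVec := by
      intro v w h
      have h1 : G *ᵥ (v - w) = 0 := by rw [Matrix.mulVec_sub, h, sub_self]
      exact sub_eq_zero.mp (hker _ h1)
    exact (Matrix.isUnit_iff_isUnit_det _).mp (Matrix.mulVec_injective_iff_isUnit.mp hinj)
  -- expansion of Ud
  have hUdeq : Ud = U - T * (G⁻¹ * (Tᵀ * (W * U))) := by
    rw [hUd]
    simp only [Hmat, Mmat, Matrix.sub_mul, Matrix.one_mul]
    rw [← hGdef]
    simp only [Matrix.mul_assoc]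
  have hTWUd : Tᵀ * W * Ud = 0 := by
    rw [hUdeq, Matrix.mul_sub]
    rw [show Tᵀ * W * (T * (G⁻¹ * (Tᵀ * (W * U)))) = G * (G⁻¹ * (Tᵀ * (W * U))) from by
      rw [hGdef]; simp only [Matrix.mul_assoc]]
    rw [Matrix.mul_nonsing_inv_cancel_left _ _ hG]
    simp only [Matrix.mul_assoc, sub_self]
  have hUdWT : Udᵀ * W * T = 0 := by
    have h1 : (Tᵀ * W * Ud)ᵀ = Udᵀ * W * T := by
      rw [Matrix.transpose_mul, Matrix.transpose_mul, Matrix.transpose_transpose, hWs]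
      simp only [Matrix.mul_assoc]
    rw [← h1, hTWUd, Matrix.transpose_zero]
  -- the matrices Y and C
  set Y := Matrix.fromCols Ud T with hYdef
  set Cm := Matrix.fromBlocks (1 : Matrix (Fin u) (Fin u) ℝ) 0
    (-(G⁻¹ * (Tᵀ * (W * U)))) (1 : Matrix (Fin t) (Fin t) ℝ) with hCdef
  have hXC : X * Cm = Y := by
    rw [hX, hCdef, Matrix.fromCols_mul_fromBlocks, hYdef, hUdeq]
    simp [Matrix.mul_neg, sub_eq_add_neg]
  have hdetC : Cm.det = 1 := by rw [hCdef, Matrix.det_fromBlocks_zero₁₂]; simp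
  have hCu : IsUnit Cm.det := hdetC ▸ isUnit_one
  have hCC : Cm * Cm⁻¹ = 1 := Matrix.mul_nonsing_inv _ hCu
  have hCtC : (Cmᵀ)⁻¹ * Cmᵀ = 1 := by
    rw [← Matrix.transpose_nonsing_inv, ← Matrix.transpose_mul, hCC, Matrix.transpose_one]
  have hYY : Yᵀ * W * Y = Matrix.fromBlocks S 0 0 G := by
    rw [hYdef, Matrix.transpose_fromCols, Matrix.fromRows_mul,
      Matrix.fromRows_mul_fromCols, hUdWT, hTWUd, ← hSdef, ← hGdef]
  have hYXC : Cmᵀ * (Xᵀ * W * X) * Cm = Yᵀ * W * Y := by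
    rw [← hXC]
    simp only [Matrix.transpose_mul, Matrix.mul_assoc]
  have hSu : IsUnit S.det := by
    have hdet : S.det * G.det = (Xᵀ * W * X).det := by
      have h := congrArg Matrix.det hYXC
      rw [hYY, Matrix.det_fromBlocks_zero₂₁, Matrix.det_mul, Matrix.det_mul,
        Matrix.det_transpose, hdetC] at h
      simpa using h.symm
    exact isUnit_of_mul_isUnit_left (by rw [hdet]; exact hfullrank)
  have hYYinv : (Yᵀ * W * Y)⁻¹ = Matrix.fromBlocks S⁻¹ 0 0 G⁻¹ := by
    apply Matrix.inv_eq_right_inv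
    rw [hYY, Matrix.fromBlocks_multiply]
    simp [Matrix.mul_nonsing_inv _ hSu, Matrix.mul_nonsing_inv _ hG]
  have h2 : (Yᵀ * W * Y)⁻¹ = Cm⁻¹ * (Xᵀ * W * X)⁻¹ * (Cmᵀ)⁻¹ := by
    rw [← hYXC, Matrix.mul_inv_rev, Matrix.mul_inv_rev]
    simp only [Matrix.mul_assoc]
  have hfwl : X * (Xᵀ * W * X)⁻¹ * Xᵀ = Ud * S⁻¹ * Udᵀ + T * G⁻¹ * Tᵀ := by
    have e1 : X * (Xᵀ * W * X)⁻¹ * Xᵀ = Y * (Yᵀ * W * Y)⁻¹ * Yᵀ := by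
      rw [h2, ← hXC, Matrix.transpose_mul]
      rw [show X * Cm * (Cm⁻¹ * (Xᵀ * W * X)⁻¹ * (Cmᵀ)⁻¹) * (Cmᵀ * Xᵀ)
          = X * ((Cm * Cm⁻¹) * ((Xᵀ * W * X)⁻¹ * ((Cmᵀ)⁻¹ * Cmᵀ))) * Xᵀ from by
        simp only [Matrix.mul_assoc]]
      rw [hCC, hCtC, Matrix.one_mul, Matrix.mul_one]
    rw [e1, hYYinv, hYdef, Matrix.transpose_fromCols, Matrix.fromCols_mul_fromBlocks,
      Matrix.fromCols_mul_fromRows]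
    simp [Matrix.mul_assoc]
  have hHX : Hmat W X = (Ud * S⁻¹ * Udᵀ + T * G⁻¹ * Tᵀ) * W := by
    simp only [Hmat, Mmat]
    rw [hfwl]
  -- blocks of Z
  have hMU : (Mmat W Ud)⁻¹ = S := by
    simp only [Mmat]
    rw [← hSdef]
    exact Matrix.nonsing_inv_nonsing_inv S hSu
  have hZi : cRows i Z = 0 := by
    ext j c
    have h := hZ ⟨i, j⟩ c
    rw [if_pos rfl] at h
    exact h
  have hZk : ∀ k, k ≠ i → cRows k Z = -(cRows k Ud * L⁻¹ * S) := by
    intro k hk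
    ext j c
    have h := hZ ⟨k, j⟩ c
    rw [if_neg (show ¬((⟨k, j⟩ : Obs n).1 = i) from hk), hMU] at h
    exact h
  have hLsum : ∑ k ∈ Finset.univ.erase i, (cRows k Ud)ᵀ * Wb k * cRows k Ud = L := by
    rw [Finset.sum_erase_eq_sub (Finset.mem_univ i), ← blocksum Wb Ud Ud, ← hW, ← hSdef]
    exact hL.symm
  have hUWZ : Udᵀ * W * Z = -S := by
    rw [hW, blocksum]
    rw [← Finset.add_sum_erase Finset.univ _ (Finset.mem_univ i), hZi, Matrix.mul_zero,
      zero_add]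
    have hsc : ∑ k ∈ Finset.univ.erase i, (cRows k Ud)ᵀ * Wb k * cRows k Z
        = ∑ k ∈ Finset.univ.erase i,
          -(((cRows k Ud)ᵀ * Wb k * cRows k Ud) * (L⁻¹ * S)) := by
      apply Finset.sum_congr rfl
      intro k hk
      rw [hZk k (Finset.ne_of_mem_erase hk)]
      simp only [Matrix.mul_neg, Matrix.mul_assoc]
    rw [hsc, Finset.sum_neg_distrib, ← Finset.sum_mul, hLsum,
      Matrix.mul_nonsing_inv_cancel_left _ _ hLinv]
  -- the key nestedness lemma
  have hGsum : ∑ k, (cRows k T)ᵀ * Wb k * cRows k T = G := by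
    rw [← blocksum Wb T T, ← hW]
  have hGk : ∀ j k : Fin m, j ≠ k →
      ((cRows j T)ᵀ * Wb j * cRows j T) * ((cRows k T)ᵀ * Wb k * cRows k T) = 0 := by
    intro j k hjk
    rw [show ((cRows j T)ᵀ * Wb j * cRows j T) * ((cRows k T)ᵀ * Wb k * cRows k T)
        = (cRows j T)ᵀ * (Wb j * ((cRows j T * (cRows k T)ᵀ) * (Wb k * cRows k T))) from by
      simp only [Matrix.mul_assoc], hnested j k hjk]
    simp
  have hcomm : ∀ k, G * ((cRows k T)ᵀ * Wb k * cRows k T)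
      = ((cRows k T)ᵀ * Wb k * cRows k T) * G := by
    intro k
    rw [← hGsum, Finset.sum_mul, Finset.mul_sum]
    apply Finset.sum_congr rfl
    intro j _
    by_cases hjk : j = k
    · subst hjk; rfl
    · rw [hGk j k hjk, hGk k j (Ne.symm hjk)]
  have hinvcomm : ∀ k, G⁻¹ * ((cRows k T)ᵀ * Wb k * cRows k T)
      = ((cRows k T)ᵀ * Wb k * cRows k T) * G⁻¹ := by
    intro k
    set A := (cRows k T)ᵀ * Wb k * cRows k T
    calc G⁻¹ * A = G⁻¹ * A * (G * G⁻¹) := by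
          rw [Matrix.mul_nonsing_inv _ hG, Matrix.mul_one]
    _ = G⁻¹ * ((A * G) * G⁻¹) := by simp only [Matrix.mul_assoc]
    _ = G⁻¹ * ((G * A) * G⁻¹) := by rw [← hcomm k]
    _ = (G⁻¹ * G) * (A * G⁻¹) := by simp only [Matrix.mul_assoc]
    _ = A * G⁻¹ := by rw [Matrix.nonsing_inv_mul _ hG, Matrix.one_mul]
  have hGTk : ∀ k, G * (cRows k T)ᵀ
      = ((cRows k T)ᵀ * Wb k * cRows k T) * (cRows k T)ᵀ := by
    intro k
    rw [← hGsum, Matrix.sum_mul, Finset.sum_eq_single k]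
    · intro j _ hjk
      rw [show ((cRows j T)ᵀ * Wb j * cRows j T) * (cRows k T)ᵀ
          = (cRows j T)ᵀ * (Wb j * (cRows j T * (cRows k T)ᵀ)) from by
        simp only [Matrix.mul_assoc], hnested j k hjk]
      simp
    · simp
  have hTkfix : ∀ k, (cRows k T)ᵀ
      = G⁻¹ * (((cRows k T)ᵀ * Wb k * cRows k T) * (cRows k T)ᵀ) := by
    intro k
    rw [← hGTk, ← Matrix.mul_assoc, Matrix.nonsing_inv_mul _ hG, Matrix.one_mul]
  have hkey : ∀ p q : Fin m, p ≠ q → cRows p T * G⁻¹ * (cRows q T)ᵀ = 0 := by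
    intro p q hpq
    conv_lhs => rw [hTkfix q]
    rw [show cRows p T * G⁻¹ * (G⁻¹ * (((cRows q T)ᵀ * Wb q * cRows q T) * (cRows q T)ᵀ))
        = cRows p T * (G⁻¹ * (G⁻¹ * ((cRows q T)ᵀ * Wb q * cRows q T))) * (cRows q T)ᵀ from by
      simp only [Matrix.mul_assoc]]
    rw [hinvcomm q]
    rw [show cRows p T * (G⁻¹ * (((cRows q T)ᵀ * Wb q * cRows q T) * G⁻¹)) * (cRows q T)ᵀ
        = cRows p T * (G⁻¹ * ((cRows q T)ᵀ * Wb q * cRows q T)) * (G⁻¹ * (cRows q T)ᵀ) from by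
      simp only [Matrix.mul_assoc]]
    rw [hinvcomm q]
    rw [show cRows p T * (((cRows q T)ᵀ * Wb q * cRows q T) * G⁻¹) * (G⁻¹ * (cRows q T)ᵀ)
        = (cRows p T * (cRows q T)ᵀ) * (Wb q * (cRows q T * (G⁻¹ * (G⁻¹ * (cRows q T)ᵀ)))) from by
      simp only [Matrix.mul_assoc]]
    rw [hnested p q hpq]
    simp
  -- the T-part of the projection kills Z on the i-rows
  have hTWZ0 : cRows i T * (G⁻¹ * (Tᵀ * W * Z)) = 0 := by
    rw [hW, blocksum]
    rw [← Finset.add_sum_erase Finset.univ _ (Finset.mem_univ i), hZi, Matrix.mul_zero,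
      zero_add]
    rw [Matrix.mul_sum, Matrix.mul_sum]
    apply Finset.sum_eq_zero
    intro k hk
    rw [hZk k (Finset.ne_of_mem_erase hk)]
    rw [Matrix.mul_neg, Matrix.mul_neg, Matrix.mul_neg, neg_eq_zero]
    rw [show cRows i T * (G⁻¹ * ((cRows k T)ᵀ * Wb k * (cRows k Ud * L⁻¹ * S)))
        = (cRows i T * G⁻¹ * (cRows k T)ᵀ) * (Wb k * (cRows k Ud * (L⁻¹ * S))) from by
      simp only [Matrix.mul_assoc]]
    rw [hkey i k (Ne.symm (Finset.ne_of_mem_erase hk))]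
    simp
  -- final assembly
  have hfinal : (1 - Hmat W X) * Z
      = Z - Ud * (S⁻¹ * (Udᵀ * W * Z)) - T * (G⁻¹ * (Tᵀ * W * Z)) := by
    rw [hHX, Matrix.sub_mul, Matrix.one_mul, Matrix.add_mul, Matrix.add_mul,
      sub_add_eq_sub_sub]
    simp only [Matrix.mul_assoc]
  rw [← cRows_mul, hfinal, cRows_sub, cRows_sub, cRows_mul, cRows_mul, hZi, hUWZ, hTWZ0]
  rw [Matrix.mul_neg, Matrix.nonsing_inv_mul _ hSu, Matrix.mul_neg, Matrix.mul_one]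
  simp
end

section
/- Under the stated clustered-model assumptions, let y = Xα + ε where ε = (ε_1',…,ε_m')' is a random N-vector with E[ε_i] = 0, E[ε_iε_i'] = Σ_i, and E[ε_iε_h'] = 0 for i ≠ h. Let ÿ = (I−H_{S̈})(I−H_T)y and β̂ = M_R̈ Σ_i R̈_i'W_iÿ_i. Then β̂ is unbiased for the coefficient block β of α corresponding to R, and Var(β̂) = M_R̈ (Σ_{i=1}^m R̈_i' W_i Σ_i W_i R̈_i) M_R̈. -/
open Matrix MeasureTheory

set_option linter.unusedSectionVars false
set_option maxHeartbeats 1000000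

section helpers
variable {m : ℕ} {n : Fin m → ℕ}

lemma sum_sigma_obs (g : Obs n → ℝ) : ∑ o : Obs n, g o = ∑ i, ∑ j, g ⟨i, j⟩ := by
  rw [← Finset.univ_sigma_univ, Finset.sum_sigma]

lemma bd_mulVec (Cb : ∀ i, Matrix (Fin (n i)) (Fin (n i)) ℝ) (v : Obs n → ℝ)
    (i : Fin m) (j : Fin (n i)) :
    (Matrix.blockDiagonal' Cb *ᵥ v) ⟨i, j⟩ = (Cb i *ᵥ cVec i v) j := by
  simp only [mulVec, dotProduct]
  rw [sum_sigma_obs (fun o => Matrix.blockDiagonal' Cb ⟨i, j⟩ o * v o)]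
  rw [Fintype.sum_eq_single i]
  · simp [cVec]
  · intro i' hi'
    exact Finset.sum_eq_zero fun j' _ => by
      rw [Matrix.blockDiagonal'_apply_ne _ _ _ (Ne.symm hi'), zero_mul]

lemma sum_cRows_mulVec {c : Type*} [Fintype c] (P : Matrix (Obs n) c ℝ)
    (Cb : ∀ i, Matrix (Fin (n i)) (Fin (n i)) ℝ) (v : Obs n → ℝ) :
    ∑ i : Fin m, ((cRows i P)ᵀ * Cb i) *ᵥ cVec i v = (Pᵀ * Matrix.blockDiagonal' Cb) *ᵥ v := by
  funext a
  rw [Finset.sum_apply]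
  have hR : ((Pᵀ * Matrix.blockDiagonal' Cb) *ᵥ v) a
      = ∑ o : Obs n, P o a * (Matrix.blockDiagonal' Cb *ᵥ v) o := by
    rw [← Matrix.mulVec_mulVec]
    simp [mulVec, dotProduct, transpose_apply]
  rw [hR, sum_sigma_obs (fun o => P o a * (Matrix.blockDiagonal' Cb *ᵥ v) o)]
  refine Finset.sum_congr rfl fun i _ => ?_
  have hbd : ∀ j, (Matrix.blockDiagonal' Cb *ᵥ v) ⟨i, j⟩ = (Cb i *ᵥ cVec i v) j :=
    bd_mulVec Cb v i
  simp only [hbd]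
  rw [← Matrix.mulVec_mulVec]
  simp [mulVec, dotProduct, cRows]

lemma sum_cRows_mul {c c' : Type*} [Fintype c] [Fintype c'] (P : Matrix (Obs n) c ℝ)
    (Cb : ∀ i, Matrix (Fin (n i)) (Fin (n i)) ℝ) (Q : Matrix (Obs n) c' ℝ) :
    ∑ i : Fin m, (cRows i P)ᵀ * Cb i * cRows i Q = Pᵀ * Matrix.blockDiagonal' Cb * Q := by
  ext a b
  have h := congrFun (sum_cRows_mulVec P Cb (fun o => Q o b)) a
  rw [Finset.sum_apply] at h
  have l1 : ∀ i : Fin m, (((cRows i P)ᵀ * Cb i) *ᵥ cVec i fun o => Q o b) a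
      = ((cRows i P)ᵀ * Cb i * cRows i Q) a b := by
    intro i; simp [Matrix.mul_apply, mulVec, dotProduct, cVec, cRows]
  have l2 : ((Pᵀ * Matrix.blockDiagonal' Cb) *ᵥ fun o => Q o b) a
      = (Pᵀ * Matrix.blockDiagonal' Cb * Q) a b := by
    simp [Matrix.mul_apply, mulVec, dotProduct]
  simp only [l1, l2] at h
  simp only [Matrix.sum_apply]
  exact h

end helpers

section posdef
variable {m : ℕ} {n : Fin m → ℕ}

lemma bd_quadform (Cb : ∀ i, Matrix (Fin (n i)) (Fin (n i)) ℝ) (x : Obs n → ℝ) :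
    x ⬝ᵥ (Matrix.blockDiagonal' Cb *ᵥ x) = ∑ i, cVec i x ⬝ᵥ (Cb i *ᵥ cVec i x) := by
  simp only [dotProduct]
  rw [sum_sigma_obs (fun o => x o * (Matrix.blockDiagonal' Cb *ᵥ x) o)]
  refine Finset.sum_congr rfl fun i _ => Finset.sum_congr rfl fun j _ => ?_
  rw [bd_mulVec]; rfl

lemma bd_posDef {Wb : ∀ i : Fin m, Matrix (Fin (n i)) (Fin (n i)) ℝ}
    (hWpd : ∀ i, (Wb i).PosDef) : (Matrix.blockDiagonal' Wb).PosDef := by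
  refine Matrix.PosDef.of_dotProduct_mulVec_pos ?_ ?_
  · show _ᴴ = _
    rw [Matrix.blockDiagonal'_conjTranspose]
    exact congrArg _ (funext fun i => (hWpd i).isHermitian)
  · intro x hx
    rw [star_trivial, bd_quadform]
    obtain ⟨o, ho⟩ : ∃ o, x o ≠ 0 := by
      by_contra h; push_neg at h; exact hx (funext h)
    refine Finset.sum_pos' (fun i _ => ?_) ⟨o.1, Finset.mem_univ _, ?_⟩
    · simpa [star_trivial] using (hWpd i).posSemidef.dotProduct_mulVec_nonneg (cVec i x)
    · have hcv : cVec o.1 x ≠ 0 := fun h => ho (by rw [show x o = cVec o.1 x o.2 from rfl, h]; rfl)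
      simpa [star_trivial] using (hWpd o.1).dotProduct_mulVec_pos hcv

lemma gram_posDef {Ω q : Type*} [Fintype Ω] [Fintype q] [DecidableEq q]
    {W : Matrix Ω Ω ℝ} (hW : W.PosDef) {Z : Matrix Ω q ℝ}
    (hZ : ∀ v, Z *ᵥ v = 0 → v = 0) : (Zᵀ * W * Z).PosDef := by
  refine Matrix.PosDef.of_dotProduct_mulVec_pos ?_ ?_
  · have := hW.posSemidef.conjTranspose_mul_mul_same Z
    simpa using this.1
  · intro v hv
    have h1 : Z *ᵥ v ≠ 0 := fun h => hv (hZ v h)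
    have := hW.dotProduct_mulVec_pos h1
    rw [star_trivial] at this ⊢
    calc v ⬝ᵥ ((Zᵀ * W * Z) *ᵥ v) = v ⬝ᵥ (Zᵀ *ᵥ (W *ᵥ (Z *ᵥ v))) := by
          rw [Matrix.mulVec_mulVec, Matrix.mulVec_mulVec]
      _ = (Z *ᵥ v) ⬝ᵥ (W *ᵥ (Z *ᵥ v)) := by
          rw [Matrix.dotProduct_mulVec, Matrix.vecMul_transpose]
      _ > 0 := this

lemma gram_isUnit_det {Ω q : Type*} [Fintype Ω] [Fintype q] [DecidableEq q]
    {W : Matrix Ω Ω ℝ} (hW : W.PosDef) {Z : Matrix Ω q ℝ}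
    (hZ : ∀ v, Z *ᵥ v = 0 → v = 0) : IsUnit (Zᵀ * W * Z).det :=
  isUnit_iff_ne_zero.mpr (gram_posDef hW hZ).det_pos.ne'

end posdef

section matalg
variable {Ω q : Type*} [Fintype Ω] [DecidableEq Ω] [Fintype q] [DecidableEq q]
variable {W : Matrix Ω Ω ℝ} {Z : Matrix Ω q ℝ}

lemma Mmat_mul_gram (h : IsUnit (Zᵀ * W * Z).det) : Mmat W Z * (Zᵀ * W * Z) = 1 :=
  Matrix.nonsing_inv_mul _ h

lemma gram_mul_Mmat (h : IsUnit (Zᵀ * W * Z).det) : (Zᵀ * W * Z) * Mmat W Z = 1 :=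
  Matrix.mul_nonsing_inv _ h

lemma Mmat_symm (hWsym : Wᵀ = W) : (Mmat W Z)ᵀ = Mmat W Z := by
  rw [Mmat, Matrix.transpose_nonsing_inv]
  congr 1
  rw [Matrix.transpose_mul, Matrix.transpose_mul, Matrix.transpose_transpose, hWsym,
    Matrix.mul_assoc]

lemma Hmat_mul_self (h : IsUnit (Zᵀ * W * Z).det) : Hmat W Z * Z = Z := by
  rw [Hmat]
  calc Z * Mmat W Z * Zᵀ * W * Z = Z * (Mmat W Z * (Zᵀ * W * Z)) := by
        simp only [Matrix.mul_assoc]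
    _ = Z := by rw [Mmat_mul_gram h, Matrix.mul_one]

lemma ZtW_mul_Hmat (h : IsUnit (Zᵀ * W * Z).det) : Zᵀ * W * Hmat W Z = Zᵀ * W := by
  rw [Hmat]
  calc Zᵀ * W * (Z * Mmat W Z * Zᵀ * W) = Zᵀ * W * Z * Mmat W Z * (Zᵀ * W) := by
        simp only [Matrix.mul_assoc]
    _ = Zᵀ * W := by rw [gram_mul_Mmat h, Matrix.one_mul]

lemma Hmat_transpose_mul_W (hWsym : Wᵀ = W) : (Hmat W Z)ᵀ * W = W * Hmat W Z := by
  rw [Hmat, Matrix.transpose_mul, Matrix.transpose_mul, Matrix.transpose_mul,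
    Matrix.transpose_transpose, hWsym, Mmat_symm hWsym]
  simp only [Matrix.mul_assoc]

lemma one_sub_Hmat_transpose_mul_W (hWsym : Wᵀ = W) :
    (1 - Hmat W Z)ᵀ * W = W * (1 - Hmat W Z) := by
  rw [Matrix.transpose_sub, Matrix.transpose_one, Matrix.sub_mul, Matrix.mul_sub,
    Matrix.one_mul, Matrix.mul_one, Hmat_transpose_mul_W hWsym]

end matalg


/-- the absorbed WLS estimator `β̂` is unbiased for the coefficient
block `β` of `α` corresponding to `R`, and
`Var(β̂) = M_R̈ (Σᵢ R̈ᵢᵀ Wᵢ Σᵢ Wᵢ R̈ᵢ) M_R̈`. -/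
theorem absorbed_wls_unbiased_and_variance
    {m r s t : ℕ} {n : Fin m → ℕ}
    (Wb : ∀ i : Fin m, Matrix (Fin (n i)) (Fin (n i)) ℝ)
    (hWpd : ∀ i, (Wb i).PosDef)
    (W : Matrix (Obs n) (Obs n) ℝ) (hW : W = Matrix.blockDiagonal' Wb)
    (R : Matrix (Obs n) (Fin r) ℝ) (S : Matrix (Obs n) (Fin s) ℝ)
    (T : Matrix (Obs n) (Fin t) ℝ)
    (X : Matrix (Obs n) (Fin r ⊕ (Fin s ⊕ Fin t)) ℝ)
    (hX : X = Matrix.fromCols R (Matrix.fromCols S T))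
    (hfullrank : IsUnit (Xᵀ * W * X).det)
    -- absorbed matrices
    (Sd : Matrix (Obs n) (Fin s) ℝ) (hSd : Sd = (1 - Hmat W T) * S)
    (Rd : Matrix (Obs n) (Fin r) ℝ)
    (hRd : Rd = (1 - Hmat W Sd) * ((1 - Hmat W T) * R))
    -- the stochastic model: y = Xα + ε with E ε = 0, E[ε_i ε_iᵀ] = Σ_i, and
    -- E[ε_i ε_hᵀ] = 0 for i ≠ h (i.e. E[εεᵀ] = blockdiag(Σ_1,…,Σ_m))
    {ΩP : Type*} [MeasurableSpace ΩP] (μ : Measure ΩP) [IsProbabilityMeasure μ]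
    (α : (Fin r ⊕ (Fin s ⊕ Fin t)) → ℝ)
    (Sig : ∀ i : Fin m, Matrix (Fin (n i)) (Fin (n i)) ℝ)
    (ε : ΩP → Obs n → ℝ)
    (hεint : ∀ a, Integrable (fun ω => ε ω a) μ)
    (hεmean : ∀ a, ∫ ω, ε ω a ∂μ = 0)
    (hεcovint : ∀ a b, Integrable (fun ω => ε ω a * ε ω b) μ)
    (hεcov : ∀ a b, ∫ ω, ε ω a * ε ω b ∂μ = Matrix.blockDiagonal' Sig a b)
    (y : ΩP → Obs n → ℝ) (hy : ∀ ω, y ω = X *ᵥ α + ε ω)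
    -- ÿ = (I−H_S̈)(I−H_T) y and β̂ = M_R̈ Σᵢ R̈ᵢᵀ Wᵢ ÿᵢ
    (yd : ΩP → Obs n → ℝ)
    (hyd : ∀ ω, yd ω = ((1 - Hmat W Sd) * (1 - Hmat W T)) *ᵥ y ω)
    (bhat : ΩP → Fin r → ℝ)
    (hbhat : ∀ ω, bhat ω =
      Mmat W Rd *ᵥ ∑ i : Fin m, ((cRows i Rd)ᵀ * Wb i) *ᵥ cVec i (yd ω)) :
    -- β̂ is unbiased for β = αᵣ, the coefficients of R
    (∀ a : Fin r, (∫ ω, bhat ω a ∂μ) = α (Sum.inl a)) ∧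
    -- and Var(β̂) = M_R̈ (Σᵢ R̈ᵢᵀ Wᵢ Σᵢ Wᵢ R̈ᵢ) M_R̈
    (∀ a b : Fin r,
      (∫ ω, (bhat ω a - ∫ ω', bhat ω' a ∂μ) * (bhat ω b - ∫ ω', bhat ω' b ∂μ) ∂μ)
        = (Mmat W Rd *
            (∑ i : Fin m, (cRows i Rd)ᵀ * Wb i * Sig i * Wb i * cRows i Rd) *
            Mmat W Rd) a b) := by
  -- symmetry and positive definiteness of W
  have hWsym : Wᵀ = W := by
    rw [hW, Matrix.blockDiagonal'_transpose]
    exact congrArg Matrix.blockDiagonal' (funext fun i => (by simpa using (hWpd i).isHermitian : (Wb i).IsSymm).eq)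
  have hWpdW : W.PosDef := by rw [hW]; exact bd_posDef hWpd
  -- injectivity statements
  have hXinj : ∀ v, X *ᵥ v = 0 → v = 0 := by
    intro v hv
    have h2 : (Xᵀ * W * X) *ᵥ v = 0 := by
      rw [← Matrix.mulVec_mulVec, ← Matrix.mulVec_mulVec, hv, Matrix.mulVec_zero,
        Matrix.mulVec_zero]
    calc v = 1 *ᵥ v := (Matrix.one_mulVec v).symm
      _ = ((Xᵀ * W * X)⁻¹ * (Xᵀ * W * X)) *ᵥ v := by rw [Matrix.nonsing_inv_mul _ hfullrank]
      _ = (Xᵀ * W * X)⁻¹ *ᵥ ((Xᵀ * W * X) *ᵥ v) := by rw [Matrix.mulVec_mulVec]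
      _ = 0 := by rw [h2, Matrix.mulVec_zero]
  have hXmv : ∀ (u : Fin r → ℝ) (w : Fin s → ℝ) (z : Fin t → ℝ),
      X *ᵥ Sum.elim u (Sum.elim w z) = R *ᵥ u + (S *ᵥ w + T *ᵥ z) := by
    intro u w z
    rw [hX, Matrix.fromCols_mulVec_sumElim, Matrix.fromCols_mulVec_sumElim]
  have hTinj : ∀ v, T *ᵥ v = 0 → v = 0 := by
    intro v hv
    have h0 := hXinj (Sum.elim 0 (Sum.elim 0 v)) (by rw [hXmv]; simp [hv])
    funext j
    simpa using congrFun h0 (Sum.inr (Sum.inr j))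
  have hSdinj : ∀ v, Sd *ᵥ v = 0 → v = 0 := by
    intro v hv
    have hexp : Sd *ᵥ v = S *ᵥ v - (T * (Mmat W T * Tᵀ * W * S)) *ᵥ v := by
      rw [hSd, Hmat, Matrix.sub_mul, Matrix.one_mul, Matrix.sub_mulVec]
      simp only [Matrix.mul_assoc]
    have h0 := hXinj (Sum.elim 0 (Sum.elim v (-((Mmat W T * Tᵀ * W * S) *ᵥ v))))
      (by
        rw [hXmv]
        rw [Matrix.mulVec_neg, Matrix.mulVec_mulVec, Matrix.mulVec_zero]
        rw [← sub_eq_add_neg, ← hexp, hv]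
        simp)
    funext j
    simpa using congrFun h0 (Sum.inr (Sum.inl j))
  have hRdinj : ∀ v, Rd *ᵥ v = 0 → v = 0 := by
    intro v hv
    set P : Matrix (Fin s) (Fin r) ℝ := Mmat W Sd * Sdᵀ * W * ((1 - Hmat W T) * R) with hP
    set Q : Matrix (Fin t) (Fin r) ℝ := Mmat W T * Tᵀ * W * R with hQ
    set K : Matrix (Fin t) (Fin s) ℝ := Mmat W T * Tᵀ * W * S with hK
    have hRdexp : Rd = R - S * P - T * (Q - K * P) := by
      rw [hRd, hP, hQ, hK, hSd, Hmat, Hmat]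
      simp only [Matrix.sub_mul, Matrix.mul_sub, Matrix.one_mul, Matrix.mul_one,
        Matrix.transpose_mul, Matrix.transpose_sub, Matrix.transpose_one, Matrix.mul_assoc]
      abel
    have h0 := hXinj (Sum.elim v (Sum.elim (-(P *ᵥ v)) (-((Q - K * P) *ᵥ v))))
      (by
        rw [hXmv]
        rw [Matrix.mulVec_neg, Matrix.mulVec_neg, Matrix.mulVec_mulVec, Matrix.mulVec_mulVec]
        have : R *ᵥ v + (-((S * P) *ᵥ v) + -((T * (Q - K * P)) *ᵥ v)) = Rd *ᵥ v := by
          rw [hRdexp, Matrix.sub_mulVec, Matrix.sub_mulVec]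
          abel
        rw [this, hv])
    funext j
    simpa using congrFun h0 (Sum.inl j)
  -- determinants
  have hdT : IsUnit (Tᵀ * W * T).det := gram_isUnit_det hWpdW hTinj
  have hdSd : IsUnit (Sdᵀ * W * Sd).det := gram_isUnit_det hWpdW hSdinj
  have hdRd : IsUnit (Rdᵀ * W * Rd).det := gram_isUnit_det hWpdW hRdinj
  have e_HT_T : Hmat W T * T = T := Hmat_mul_self hdT
  have e_HSd_Sd : Hmat W Sd * Sd = Sd := Hmat_mul_self hdSd
  -- key orthogonality identities
  have d1 : Sdᵀ * W * T = 0 := by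
    rw [hSd, Matrix.transpose_mul]
    calc Sᵀ * (1 - Hmat W T)ᵀ * W * T
        = Sᵀ * ((1 - Hmat W T)ᵀ * W) * T := by simp only [Matrix.mul_assoc]
      _ = Sᵀ * (W * (1 - Hmat W T)) * T := by rw [one_sub_Hmat_transpose_mul_W hWsym]
      _ = Sᵀ * W * ((1 - Hmat W T) * T) := by simp only [Matrix.mul_assoc]
      _ = 0 := by rw [Matrix.sub_mul, Matrix.one_mul, e_HT_T, sub_self, Matrix.mul_zero]
  have d2 : Hmat W Sd * T = 0 := by
    rw [Hmat]
    calc Sd * Mmat W Sd * Sdᵀ * W * T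
        = Sd * (Mmat W Sd * (Sdᵀ * W * T)) := by simp only [Matrix.mul_assoc]
      _ = 0 := by rw [d1, Matrix.mul_zero, Matrix.mul_zero]
  have d3 : Rdᵀ * W = Rᵀ * W * ((1 - Hmat W T) * (1 - Hmat W Sd)) := by
    rw [hRd, Matrix.transpose_mul, Matrix.transpose_mul]
    calc Rᵀ * (1 - Hmat W T)ᵀ * (1 - Hmat W Sd)ᵀ * W
        = Rᵀ * (1 - Hmat W T)ᵀ * ((1 - Hmat W Sd)ᵀ * W) := by simp only [Matrix.mul_assoc]
      _ = Rᵀ * (1 - Hmat W T)ᵀ * (W * (1 - Hmat W Sd)) := by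
          rw [one_sub_Hmat_transpose_mul_W hWsym]
      _ = Rᵀ * ((1 - Hmat W T)ᵀ * W) * (1 - Hmat W Sd) := by simp only [Matrix.mul_assoc]
      _ = Rᵀ * (W * (1 - Hmat W T)) * (1 - Hmat W Sd) := by
          rw [one_sub_Hmat_transpose_mul_W hWsym]
      _ = Rᵀ * W * ((1 - Hmat W T) * (1 - Hmat W Sd)) := by simp only [Matrix.mul_assoc]
  have h1SdT : (1 - Hmat W Sd) * T = T := by
    rw [Matrix.sub_mul, Matrix.one_mul, d2, sub_zero]
  have d4 : Rdᵀ * W * T = 0 := by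
    rw [d3]
    calc Rᵀ * W * ((1 - Hmat W T) * (1 - Hmat W Sd)) * T
        = Rᵀ * W * ((1 - Hmat W T) * ((1 - Hmat W Sd) * T)) := by simp only [Matrix.mul_assoc]
      _ = Rᵀ * W * ((1 - Hmat W T) * T) := by rw [h1SdT]
      _ = 0 := by rw [Matrix.sub_mul, Matrix.one_mul, e_HT_T, sub_self, Matrix.mul_zero]
  have d5 : Rdᵀ * W * Sd = 0 := by
    rw [d3]
    calc Rᵀ * W * ((1 - Hmat W T) * (1 - Hmat W Sd)) * Sd
        = Rᵀ * W * ((1 - Hmat W T) * ((1 - Hmat W Sd) * Sd)) := by simp only [Matrix.mul_assoc]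
      _ = 0 := by
          have h1SdSd : (1 - Hmat W Sd) * Sd = 0 := by
            rw [Matrix.sub_mul, Matrix.one_mul, e_HSd_Sd, sub_self]
          rw [h1SdSd, Matrix.mul_zero, Matrix.mul_zero]
  have d6 : Rdᵀ * W * Hmat W T = 0 := by
    rw [Hmat]
    calc Rdᵀ * W * (T * Mmat W T * Tᵀ * W)
        = Rdᵀ * W * T * (Mmat W T * (Tᵀ * W)) := by simp only [Matrix.mul_assoc]
      _ = 0 := by rw [d4, Matrix.zero_mul]
  have d7 : Rdᵀ * W * Hmat W Sd = 0 := by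
    rw [Hmat]
    calc Rdᵀ * W * (Sd * Mmat W Sd * Sdᵀ * W)
        = Rdᵀ * W * Sd * (Mmat W Sd * (Sdᵀ * W)) := by simp only [Matrix.mul_assoc]
      _ = 0 := by rw [d5, Matrix.zero_mul]
  have d8 : Rdᵀ * W * ((1 - Hmat W Sd) * (1 - Hmat W T)) = Rdᵀ * W := by
    have hmul : (1 - Hmat W Sd) * (1 - Hmat W T)
        = 1 - Hmat W T - Hmat W Sd + Hmat W Sd * Hmat W T := by noncomm_ring
    rw [hmul]
    simp only [Matrix.mul_sub, Matrix.mul_add, Matrix.mul_one, ← Matrix.mul_assoc, d6, d7,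
      Matrix.zero_mul]
    abel
  have d9 : Rdᵀ * W * S = 0 := by
    have hS : S = Sd + Hmat W T * S := by
      rw [hSd, Matrix.sub_mul, Matrix.one_mul]; abel
    rw [hS, Matrix.mul_add, d5, ← Matrix.mul_assoc, d6, Matrix.zero_mul, add_zero]
  have d10 : Rdᵀ * W * R = Rdᵀ * W * Rd := by
    have hR : R = Rd + Hmat W Sd * ((1 - Hmat W T) * R) + Hmat W T * R := by
      rw [hRd]
      simp only [Matrix.sub_mul, Matrix.mul_sub, Matrix.one_mul]
      abel
    rw [hR]
    simp only [Matrix.mul_add, ← Matrix.mul_assoc, d6, d7, Matrix.zero_mul, add_zero]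
  -- the estimator as an affine function of ε
  set Bmat : Matrix (Fin r) (Obs n) ℝ := Mmat W Rd * (Rdᵀ * W) with hBmat
  have bX1 : Bmat * R = 1 := by
    rw [hBmat, Matrix.mul_assoc, d10]
    exact Mmat_mul_gram hdRd
  have bX2 : Bmat * S = 0 := by
    rw [hBmat, Matrix.mul_assoc, d9, Matrix.mul_zero]
  have bX3 : Bmat * T = 0 := by
    rw [hBmat, Matrix.mul_assoc, d4, Matrix.mul_zero]
  have hBXα : Bmat *ᵥ (X *ᵥ α) = fun a => α (Sum.inl a) := by
    have hα : α = Sum.elim (fun a => α (Sum.inl a))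
        (Sum.elim (fun b => α (Sum.inr (Sum.inl b))) (fun c => α (Sum.inr (Sum.inr c)))) := by
      funext x; rcases x with a | (b | c) <;> rfl
    rw [hX, hα, Matrix.fromCols_mulVec_sumElim, Matrix.fromCols_mulVec_sumElim,
      Matrix.mulVec_add, Matrix.mulVec_add, Matrix.mulVec_mulVec, Matrix.mulVec_mulVec,
      Matrix.mulVec_mulVec, bX1, bX2, bX3, Matrix.one_mulVec, Matrix.zero_mulVec,
      Matrix.zero_mulVec, add_zero, add_zero]
    rfl
  have hrep : ∀ ω, bhat ω = (fun a => α (Sum.inl a)) + Bmat *ᵥ ε ω := by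
    intro ω
    rw [hbhat ω, sum_cRows_mulVec Rd Wb (yd ω), ← hW, hyd ω, hy ω, Matrix.mulVec_mulVec,
      Matrix.mulVec_mulVec, Matrix.mul_assoc, d8]
    rw [← hBmat, Matrix.mulVec_add, hBXα]
  -- unbiasedness
  have hεint' : ∀ (x : Fin r), Integrable (fun ω => ∑ o : Obs n, Bmat x o * ε ω o) μ :=
    fun x => integrable_finset_sum _ fun o _ => (hεint o).const_mul _
  have hmean : ∀ a : Fin r, ∫ ω, bhat ω a ∂μ = α (Sum.inl a) := by
    intro a
    have hfun : (fun ω => bhat ω a) = fun ω => α (Sum.inl a) + ∑ o : Obs n, Bmat a o * ε ω o := by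
      funext ω
      rw [hrep ω]
      simp [mulVec, dotProduct]
    rw [hfun, integral_add (integrable_const _) (hεint' a), integral_const,
      integral_finset_sum _ (fun o _ => (hεint o).const_mul _)]
    simp [integral_const_mul, hεmean, measure_univ]
  refine ⟨hmean, ?_⟩
  -- variance
  have hBsig : Bmat * Matrix.blockDiagonal' Sig * Bmatᵀ
      = Mmat W Rd * (∑ i : Fin m, (cRows i Rd)ᵀ * Wb i * Sig i * Wb i * cRows i Rd) *
        Mmat W Rd := by
    have hsum : ∑ i : Fin m, (cRows i Rd)ᵀ * Wb i * Sig i * Wb i * cRows i Rd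
        = Rdᵀ * Matrix.blockDiagonal' (fun i => Wb i * Sig i * Wb i) * Rd := by
      rw [← sum_cRows_mul Rd (fun i => Wb i * Sig i * Wb i) Rd]
      exact Finset.sum_congr rfl fun i _ => by simp only [Matrix.mul_assoc]
    have hbd2 : Matrix.blockDiagonal' (fun i => Wb i * Sig i * Wb i)
        = W * Matrix.blockDiagonal' Sig * W := by
      rw [hW, ← Matrix.blockDiagonal'_mul, ← Matrix.blockDiagonal'_mul]
    have hBt : Bmatᵀ = W * Rd * Mmat W Rd := by
      rw [hBmat, Matrix.transpose_mul, Matrix.transpose_mul, Matrix.transpose_transpose,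
        hWsym, Mmat_symm hWsym, Matrix.mul_assoc]
    rw [hsum, hbd2, hBt, hBmat]
    simp only [Matrix.mul_assoc]
  intro a b
  have hc : ∀ (x : Fin r) (ω : ΩP), bhat ω x - ∫ ω', bhat ω' x ∂μ
      = ∑ o : Obs n, Bmat x o * ε ω o := by
    intro x ω
    rw [hmean x, hrep ω]
    simp [mulVec, dotProduct]
  simp only [hc]
  have hexp : ∀ ω, (∑ o : Obs n, Bmat a o * ε ω o) * (∑ o : Obs n, Bmat b o * ε ω o)
      = ∑ o : Obs n, ∑ o' : Obs n, Bmat a o * Bmat b o' * (ε ω o * ε ω o') := by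
    intro ω
    rw [Finset.sum_mul_sum]
    exact Finset.sum_congr rfl fun o _ => Finset.sum_congr rfl fun o' _ => by ring
  simp only [hexp]
  rw [integral_finset_sum _ (fun o _ =>
    integrable_finset_sum _ fun o' _ => (hεcovint o o').const_mul _)]
  have hterm : ∀ o : Obs n, ∫ ω, ∑ o' : Obs n, Bmat a o * Bmat b o' * (ε ω o * ε ω o') ∂μ
      = ∑ o' : Obs n, Bmat a o * Bmat b o' * Matrix.blockDiagonal' Sig o o' := by
    intro o
    rw [integral_finset_sum _ (fun o' _ => (hεcovint o o').const_mul _)]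
    exact Finset.sum_congr rfl fun o' _ => by rw [integral_const_mul, hεcov]
  simp only [hterm]
  rw [← hBsig]
  simp only [Matrix.mul_apply, Matrix.transpose_apply, Finset.sum_mul]
  rw [Finset.sum_comm]
  exact Finset.sum_congr rfl fun o _ => Finset.sum_congr rfl fun o' _ => by ring
end
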